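/- For every n ≥ 2, the singular twisted virtual pure braid monoid STVP_n := φ₁⁻¹(identity), regarded as a submonoid of STVB_n, is generated as a monoid by the elements λ_{k,l}, λ̄_{k,l} and y_{k,l} for 1 ≤ k ≠ l ≤ n together with γ_1,…,γ_n. -/

import Mathlib

namespace SingTVB

/-- Generators of the singular twisted virtual braid monoid `STVB n`
(0-based indexing: `sig i` is the paper's σ_{i+1}, `gam j` is the paper's γ_{j+1}). -/
inductive Gen (n : ℕ) : Type
  | sig : Fin (n - 1) → Gen n
  | sigb : Fin (n - 1) → Gen n
  | rho : Fin (n - 1) → Gen n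
  | tau : Fin (n - 1) → Gen n
  | gam : Fin n → Gen n

abbrev FM (n : ℕ) := FreeMonoid (Gen n)

/-- The strand `i` (lower strand of the `i`-th crossing), as an element of `Fin n`. -/
def fa {n : ℕ} (i : Fin (n - 1)) : Fin n := ⟨i.val, by have := i.isLt; omega⟩
/-- The strand `i+1` (upper strand of the `i`-th crossing), as an element of `Fin n`. -/
def fb {n : ℕ} (i : Fin (n - 1)) : Fin n := ⟨i.val + 1, by have := i.isLt; omega⟩

def Ws {n : ℕ} (i : Fin (n - 1)) : FM n := FreeMonoid.of (Gen.sig i)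
def Wsb {n : ℕ} (i : Fin (n - 1)) : FM n := FreeMonoid.of (Gen.sigb i)
def Wr {n : ℕ} (i : Fin (n - 1)) : FM n := FreeMonoid.of (Gen.rho i)
def Wt {n : ℕ} (i : Fin (n - 1)) : FM n := FreeMonoid.of (Gen.tau i)
def Wg {n : ℕ} (j : Fin n) : FM n := FreeMonoid.of (Gen.gam j)

/-- `|i - j| > 1`. -/
def Far {m : ℕ} (i j : Fin m) : Prop := i.val + 1 < j.val ∨ j.val + 1 < i.val

/-- Defining relations of the singular twisted virtual braid monoid. -/
inductive Rel (n : ℕ) : FM n → FM n → Prop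
  | ss {i j : Fin (n - 1)} (h : Far i j) : Rel n (Ws i * Ws j) (Ws j * Ws i)
  | rr {i j : Fin (n - 1)} (h : Far i j) : Rel n (Wr i * Wr j) (Wr j * Wr i)
  | sr {i j : Fin (n - 1)} (h : Far i j) : Rel n (Ws i * Wr j) (Wr j * Ws i)
  | tt {i j : Fin (n - 1)} (h : Far i j) : Rel n (Wt i * Wt j) (Wt j * Wt i)
  | st {i j : Fin (n - 1)} (h : Far i j) : Rel n (Ws i * Wt j) (Wt j * Ws i)
  | tr {i j : Fin (n - 1)} (h : Far i j) : Rel n (Wt i * Wr j) (Wr j * Wt i)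
  | sss {i j : Fin (n - 1)} (h : j.val = i.val + 1) :
      Rel n (Ws i * Ws j * Ws i) (Ws j * Ws i * Ws j)
  | rrr {i j : Fin (n - 1)} (h : j.val = i.val + 1) :
      Rel n (Wr i * Wr j * Wr i) (Wr j * Wr i * Wr j)
  | rsr {i j : Fin (n - 1)} (h : j.val = i.val + 1) :
      Rel n (Wr i * Ws j * Wr i) (Wr j * Ws i * Wr j)
  | rtr {i j : Fin (n - 1)} (h : j.val = i.val + 1) :
      Rel n (Wr i * Wt j * Wr i) (Wr j * Wt i * Wr j)
  | sst {i j : Fin (n - 1)} (h : j.val = i.val + 1) :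
      Rel n (Ws i * Ws j * Wt i) (Wt j * Ws i * Ws j)
  | sst' {i j : Fin (n - 1)} (h : j.val = i.val + 1) :
      Rel n (Ws j * Ws i * Wt j) (Wt i * Ws j * Ws i)
  | rho2 (i : Fin (n - 1)) : Rel n (Wr i * Wr i) 1
  | ssb (i : Fin (n - 1)) : Rel n (Ws i * Wsb i) 1
  | sbs (i : Fin (n - 1)) : Rel n (Wsb i * Ws i) 1
  | stc (i : Fin (n - 1)) : Rel n (Ws i * Wt i) (Wt i * Ws i)
  | grel (i : Fin (n - 1)) : Rel n (Wg (fb i) * Wr i) (Wr i * Wg (fa i))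
  | rsrg (i : Fin (n - 1)) :
      Rel n (Wr i * Ws i * Wr i) (Wg (fb i) * Wg (fa i) * Ws i * Wg (fa i) * Wg (fb i))
  | rtrg (i : Fin (n - 1)) :
      Rel n (Wr i * Wt i * Wr i) (Wg (fb i) * Wg (fa i) * Wt i * Wg (fa i) * Wg (fb i))
  | g2 (j : Fin n) : Rel n (Wg j * Wg j) 1
  | gg (i j : Fin n) : Rel n (Wg i * Wg j) (Wg j * Wg i)
  | grc {i : Fin (n - 1)} {j : Fin n} (h1 : j ≠ fa i) (h2 : j ≠ fb i) :
      Rel n (Wg j * Wr i) (Wr i * Wg j)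
  | sgc {i : Fin (n - 1)} {j : Fin n} (h1 : j ≠ fa i) (h2 : j ≠ fb i) :
      Rel n (Ws i * Wg j) (Wg j * Ws i)
  | tgc {i : Fin (n - 1)} {j : Fin n} (h1 : j ≠ fa i) (h2 : j ≠ fb i) :
      Rel n (Wt i * Wg j) (Wg j * Wt i)

/-- The singular twisted virtual braid monoid on `n` strands. -/
abbrev STVB (n : ℕ) := PresentedMonoid (Rel n)

def mkS (n : ℕ) : FM n →* STVB n := PresentedMonoid.mk (Rel n)

def sigE (n : ℕ) (i : Fin (n - 1)) : STVB n := mkS n (Ws i)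
def sigbE (n : ℕ) (i : Fin (n - 1)) : STVB n := mkS n (Wsb i)
def rhoE (n : ℕ) (i : Fin (n - 1)) : STVB n := mkS n (Wr i)
def tauE (n : ℕ) (i : Fin (n - 1)) : STVB n := mkS n (Wt i)
def gamE (n : ℕ) (j : Fin n) : STVB n := mkS n (Wg j)

/-- The transposition `(i, i+1)` in the symmetric group on `Fin n`. -/
def swp {n : ℕ} (i : Fin (n - 1)) : Equiv.Perm (Fin n) := Equiv.swap (fa i) (fb i)

end SingTVB
namespace SingTVB

/-- ρ-generator word with a natural-number (0-based) index; junk value `1` out of range. -/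
def WrN (n : ℕ) (k : ℕ) : FM n := if h : k < n - 1 then Wr ⟨k, h⟩ else 1
def WsN (n : ℕ) (k : ℕ) : FM n := if h : k < n - 1 then Ws ⟨k, h⟩ else 1
def WsbN (n : ℕ) (k : ℕ) : FM n := if h : k < n - 1 then Wsb ⟨k, h⟩ else 1
def WtN (n : ℕ) (k : ℕ) : FM n := if h : k < n - 1 then Wt ⟨k, h⟩ else 1

/-- The ascending word `ρ_{i+1} ρ_{i+2} ⋯ ρ_{j-1}` (0-based strand indices `i < j`). -/
def asc (n i j : ℕ) : FM n := ((List.range' (i + 1) (j - 1 - i)).map (WrN n)).prod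
/-- The descending word `ρ_{j-1} ρ_{j-2} ⋯ ρ_{i+1}` (0-based strand indices `i < j`). -/
def desc (n i j : ℕ) : FM n := ((List.range' (i + 1) (j - 1 - i)).reverse.map (WrN n)).prod

/-- The word for the generator `λ_{i,j}` (0-based strands `i ≠ j`), built from
`λ_{i,i+1} = ρ_i σ̄_i` and `λ_{i+1,i} = ρ_i λ_{i,i+1} ρ_i` by conjugation. -/
def lamW (n i j : ℕ) : FM n :=
  if i < j then desc n i j * (WrN n i * WsbN n i) * asc n i j
  else desc n j i * (WrN n j * (WrN n j * WsbN n j) * WrN n j) * asc n j i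

/-- The word for `λ̄_{i,j}`, built from `λ̄_{i,i+1} = σ_i ρ_i`. -/
def lamBarW (n i j : ℕ) : FM n :=
  if i < j then desc n i j * (WsN n i * WrN n i) * asc n i j
  else desc n j i * (WrN n j * (WsN n j * WrN n j) * WrN n j) * asc n j i

/-- The word for `y_{i,j}`, built from `y_{i,i+1} = τ_i ρ_i`. -/
def yW (n i j : ℕ) : FM n :=
  if i < j then desc n i j * (WtN n i * WrN n i) * asc n i j
  else desc n j i * (WrN n j * (WtN n j * WrN n j) * WrN n j) * asc n j i

/-- The word for `x_{i,j}`, built from `x_{i,i+1} = σ_i` and `x_{i+1,i} = ρ_i σ_i ρ_i`. -/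
def xW (n i j : ℕ) : FM n :=
  if i < j then desc n i j * WsN n i * asc n i j
  else desc n j i * (WrN n j * WsN n j * WrN n j) * asc n j i

/-- The word for `x̄_{i,j}`, with `σ̄` in place of `σ`. -/
def xBarW (n i j : ℕ) : FM n :=
  if i < j then desc n i j * WsbN n i * asc n i j
  else desc n j i * (WrN n j * WsbN n j * WrN n j) * asc n j i

/-- The word for `z_{i,j}`, built from `z_{i,i+1} = τ_i` and `z_{i+1,i} = ρ_i τ_i ρ_i`. -/
def zW (n i j : ℕ) : FM n :=
  if i < j then desc n i j * WtN n i * asc n i j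
  else desc n j i * (WrN n j * WtN n j * WrN n j) * asc n j i

def lam (n : ℕ) (i j : Fin n) : STVB n := mkS n (lamW n i j)
def lamBar (n : ℕ) (i j : Fin n) : STVB n := mkS n (lamBarW n i j)
def yel (n : ℕ) (i j : Fin n) : STVB n := mkS n (yW n i j)
def xel (n : ℕ) (i j : Fin n) : STVB n := mkS n (xW n i j)
def xBar (n : ℕ) (i j : Fin n) : STVB n := mkS n (xBarW n i j)
def zel (n : ℕ) (i j : Fin n) : STVB n := mkS n (zW n i j)

end SingTVB
namespace SingTVB
namespace TVP

variable {n : ℕ}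


theorem cmul_assoc {M : Type*} [Monoid M] {a b : M} (h : a * b = b * a) (x : M) :
    a * (b * x) = b * (a * x) := by rw [← mul_assoc, h, mul_assoc]

theorem one_pivot {M : Type*} [Monoid M] {a b : M} (h : a * b = 1) (x : M) :
    a * (b * x) = x := by rw [← mul_assoc, h, one_mul]

theorem mk_rel {a b : FM n} (h : Rel n a b) : mkS n a = mkS n b :=
  Quotient.sound (ConGen.Rel.of _ _ h)

/-- ρ with ℕ index (junk 1 out of range). -/
def rN (n k : ℕ) : STVB n := mkS n (WrN n k)
def sN (n k : ℕ) : STVB n := mkS n (WsN n k)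
def sbN (n k : ℕ) : STVB n := mkS n (WsbN n k)
def tN (n k : ℕ) : STVB n := mkS n (WtN n k)

theorem rN_in {k : ℕ} (h : k < n - 1) : rN n k = mkS n (Wr ⟨k, h⟩) := by
  simp [rN, WrN, h]
theorem rN_out {k : ℕ} (h : ¬ k < n - 1) : rN n k = 1 := by
  simp [rN, WrN, h]
theorem sN_in {k : ℕ} (h : k < n - 1) : sN n k = mkS n (Ws ⟨k, h⟩) := by
  simp [sN, WsN, h]
theorem sN_out {k : ℕ} (h : ¬ k < n - 1) : sN n k = 1 := by
  simp [sN, WsN, h]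
theorem sbN_in {k : ℕ} (h : k < n - 1) : sbN n k = mkS n (Wsb ⟨k, h⟩) := by
  simp [sbN, WsbN, h]
theorem sbN_out {k : ℕ} (h : ¬ k < n - 1) : sbN n k = 1 := by
  simp [sbN, WsbN, h]
theorem tN_in {k : ℕ} (h : k < n - 1) : tN n k = mkS n (Wt ⟨k, h⟩) := by
  simp [tN, WtN, h]
theorem tN_out {k : ℕ} (h : ¬ k < n - 1) : tN n k = 1 := by
  simp [tN, WtN, h]

/-- ℕ-far. -/
def FarN (i j : ℕ) : Prop := i + 1 < j ∨ j + 1 < i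

theorem r_sq (i : ℕ) : rN n i * rN n i = 1 := by
  by_cases h : i < n - 1
  · rw [rN_in h, ← map_mul]; exact mk_rel (Rel.rho2 _)
  · rw [rN_out h, one_mul]

theorem s_sb (i : ℕ) : sN n i * sbN n i = 1 := by
  by_cases h : i < n - 1
  · rw [sN_in h, sbN_in h, ← map_mul]; exact mk_rel (Rel.ssb _)
  · rw [sN_out h, sbN_out h, one_mul]

theorem sb_s (i : ℕ) : sbN n i * sN n i = 1 := by
  by_cases h : i < n - 1
  · rw [sN_in h, sbN_in h, ← map_mul]; exact mk_rel (Rel.sbs _)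
  · rw [sN_out h, sbN_out h, one_mul]

theorem rr_far {i j : ℕ} (h : FarN i j) : rN n i * rN n j = rN n j * rN n i := by
  by_cases hi : i < n - 1
  · by_cases hj : j < n - 1
    · rw [rN_in hi, rN_in hj, ← map_mul, ← map_mul]
      exact mk_rel (Rel.rr h)
    · rw [rN_out hj, one_mul, mul_one]
  · rw [rN_out hi, one_mul, mul_one]

theorem sr_far {i j : ℕ} (h : FarN i j) : sN n i * rN n j = rN n j * sN n i := by
  by_cases hi : i < n - 1
  · by_cases hj : j < n - 1
    · rw [sN_in hi, rN_in hj, ← map_mul, ← map_mul]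
      exact mk_rel (Rel.sr h)
    · rw [rN_out hj, one_mul, mul_one]
  · rw [sN_out hi, one_mul, mul_one]

theorem tr_far {i j : ℕ} (h : FarN i j) : tN n i * rN n j = rN n j * tN n i := by
  by_cases hi : i < n - 1
  · by_cases hj : j < n - 1
    · rw [tN_in hi, rN_in hj, ← map_mul, ← map_mul]
      exact mk_rel (Rel.tr h)
    · rw [rN_out hj, one_mul, mul_one]
  · rw [tN_out hi, one_mul, mul_one]

theorem sbr_far {i j : ℕ} (h : FarN i j) : sbN n i * rN n j = rN n j * sbN n i := by
  calc sbN n i * rN n j = sbN n i * rN n j * (sN n i * sbN n i) := by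
        rw [s_sb, mul_one]
    _ = sbN n i * (rN n j * sN n i) * sbN n i := by
        simp only [mul_assoc]
    _ = sbN n i * (sN n i * rN n j) * sbN n i := by rw [← sr_far h]
    _ = rN n j * sbN n i := by
        rw [← mul_assoc]; rw [sb_s, one_mul]

theorem rrr_braid {i : ℕ} (h : i + 1 < n - 1) :
    rN n i * rN n (i+1) * rN n i = rN n (i+1) * rN n i * rN n (i+1) := by
  have hi : i < n - 1 := by omega
  rw [rN_in hi, rN_in h, ← map_mul, ← map_mul, ← map_mul, ← map_mul]
  exact mk_rel (Rel.rrr rfl)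

theorem rsr_braid {i : ℕ} (h : i + 1 < n - 1) :
    rN n i * sN n (i+1) * rN n i = rN n (i+1) * sN n i * rN n (i+1) := by
  have hi : i < n - 1 := by omega
  rw [rN_in hi, rN_in h, sN_in hi, sN_in h, ← map_mul, ← map_mul, ← map_mul, ← map_mul]
  exact mk_rel (Rel.rsr rfl)

theorem rtr_braid {i : ℕ} (h : i + 1 < n - 1) :
    rN n i * tN n (i+1) * rN n i = rN n (i+1) * tN n i * rN n (i+1) := by
  have hi : i < n - 1 := by omega
  rw [rN_in hi, rN_in h, tN_in hi, tN_in h, ← map_mul, ← map_mul, ← map_mul, ← map_mul]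
  exact mk_rel (Rel.rtr rfl)

theorem rsbr_braid {i : ℕ} (h : i + 1 < n - 1) :
    rN n i * sbN n (i+1) * rN n i = rN n (i+1) * sbN n i * rN n (i+1) := by
  have hLA : (rN n i * sbN n (i+1) * rN n i) * (rN n i * sN n (i+1) * rN n i) = 1 := by
    simp only [mul_assoc]
    rw [one_pivot (r_sq (n:=n) i), one_pivot (sb_s (i+1)), r_sq]
  have hAR : (rN n i * sN n (i+1) * rN n i) * (rN n (i+1) * sbN n i * rN n (i+1)) = 1 := by
    rw [rsr_braid h]
    simp only [mul_assoc]
    rw [one_pivot (r_sq (n:=n) (i+1)), one_pivot (s_sb i), r_sq]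
  have h1 : rN n i * sbN n (i+1) * rN n i *
      (rN n i * sN n (i+1) * rN n i * (rN n (i+1) * sbN n i * rN n (i+1))) =
      rN n (i+1) * sbN n i * rN n (i+1) := by
    rw [← mul_assoc, hLA, one_mul]
  rw [hAR, mul_one] at h1
  exact h1

end TVP
end SingTVB
namespace SingTVB
namespace TVP

variable {n : ℕ}

/-- swap with ℕ index (junk 1 out of range). -/
def swpN (n i : ℕ) : Equiv.Perm (Fin n) := if h : i < n - 1 then swp ⟨i, h⟩ else 1

theorem swpN_in {i : ℕ} (h : i < n - 1) : swpN n i = swp ⟨i, h⟩ := by simp [swpN, h]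
theorem swpN_out {i : ℕ} (h : ¬ i < n - 1) : swpN n i = 1 := by simp [swpN, h]

theorem swpN_sq (i : ℕ) : swpN n i * swpN n i = 1 := by
  by_cases h : i < n - 1
  · rw [swpN_in h]; exact Equiv.swap_mul_self _ _
  · rw [swpN_out h, one_mul]

theorem swpN_inv (i : ℕ) : (swpN n i)⁻¹ = swpN n i := by
  by_cases h : i < n - 1
  · rw [swpN_in h]; exact Equiv.swap_inv _ _
  · rw [swpN_out h]; rfl

theorem swpN_apply {i : ℕ} (h : i < n - 1) (x : Fin n) :
    ((swpN n i) x).val = if x.val = i then i + 1 else if x.val = i + 1 then i else x.val := by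
  rw [swpN_in h]
  show ((Equiv.swap (fa ⟨i, h⟩) (fb ⟨i, h⟩)) x).val = _
  by_cases h1 : x = fa ⟨i, h⟩
  · rw [h1, Equiv.swap_apply_left]
    simp [fa, fb]
  · by_cases h2 : x = fb ⟨i, h⟩
    · rw [h2, Equiv.swap_apply_right]
      simp [fa, fb]
    · rw [Equiv.swap_apply_of_ne_of_ne h1 h2]
      have hv1 : x.val ≠ i := fun hc => h1 (Fin.ext hc)
      have hv2 : x.val ≠ i + 1 := fun hc => h2 (Fin.ext hc)
      rw [if_neg hv1, if_neg hv2]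

/-- γ conjugation by a single ρ. -/
theorem rgr {i : ℕ} (hi : i < n - 1) (j : Fin n) :
    rN n i * gamE n j * rN n i = gamE n (swpN n i j) := by
  have hrel : gamE n (fb ⟨i, hi⟩) * mkS n (Wr ⟨i, hi⟩) =
      mkS n (Wr ⟨i, hi⟩) * gamE n (fa ⟨i, hi⟩) := by
    rw [gamE, gamE, ← map_mul, ← map_mul]
    exact mk_rel (Rel.grel _)
  rw [rN_in hi, swpN_in hi]
  by_cases hja : j = fa ⟨i, hi⟩
  · subst hja
    rw [show (swp ⟨i, hi⟩) (fa ⟨i, hi⟩) = fb ⟨i, hi⟩ from Equiv.swap_apply_left _ _]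
    calc mkS n (Wr ⟨i, hi⟩) * gamE n (fa ⟨i, hi⟩) * mkS n (Wr ⟨i, hi⟩)
        = gamE n (fb ⟨i, hi⟩) * (mkS n (Wr ⟨i, hi⟩) * mkS n (Wr ⟨i, hi⟩)) := by
          rw [← hrel, mul_assoc]
      _ = gamE n (fb ⟨i, hi⟩) := by
          rw [← map_mul, mk_rel (Rel.rho2 _), map_one, mul_one]
  · by_cases hjb : j = fb ⟨i, hi⟩
    · subst hjb
      rw [show (swp ⟨i, hi⟩) (fb ⟨i, hi⟩) = fa ⟨i, hi⟩ from Equiv.swap_apply_right _ _]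
      calc mkS n (Wr ⟨i, hi⟩) * gamE n (fb ⟨i, hi⟩) * mkS n (Wr ⟨i, hi⟩)
          = mkS n (Wr ⟨i, hi⟩) * (gamE n (fb ⟨i, hi⟩) * mkS n (Wr ⟨i, hi⟩)) := by
            rw [mul_assoc]
        _ = mkS n (Wr ⟨i, hi⟩) * mkS n (Wr ⟨i, hi⟩) * gamE n (fa ⟨i, hi⟩) := by
            rw [hrel, mul_assoc]
        _ = gamE n (fa ⟨i, hi⟩) := by
            rw [← map_mul, mk_rel (Rel.rho2 _), map_one, one_mul]
    · rw [show (swp ⟨i, hi⟩) j = j from Equiv.swap_apply_of_ne_of_ne hja hjb]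
      have hcom : gamE n j * mkS n (Wr ⟨i, hi⟩) = mkS n (Wr ⟨i, hi⟩) * gamE n j := by
        rw [gamE, ← map_mul, ← map_mul]
        exact mk_rel (Rel.grc hja hjb)
      calc mkS n (Wr ⟨i, hi⟩) * gamE n j * mkS n (Wr ⟨i, hi⟩)
          = mkS n (Wr ⟨i, hi⟩) * (gamE n j * mkS n (Wr ⟨i, hi⟩)) := by rw [mul_assoc]
        _ = mkS n (Wr ⟨i, hi⟩) * mkS n (Wr ⟨i, hi⟩) * gamE n j := by rw [hcom, mul_assoc]
        _ = gamE n j := by rw [← map_mul, mk_rel (Rel.rho2 _), map_one, one_mul]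

theorem rg_comm {i : ℕ} (hi : i < n - 1) (j : Fin n) :
    rN n i * gamE n j = gamE n (swpN n i j) * rN n i := by
  have := rgr hi j
  calc rN n i * gamE n j = rN n i * gamE n j * (rN n i * rN n i) := by
        rw [r_sq, mul_one]
    _ = (rN n i * gamE n j * rN n i) * rN n i := by simp only [mul_assoc]
    _ = gamE n (swpN n i j) * rN n i := by rw [this]

/-- list of ρ's. -/
def RL (n : ℕ) (u : List ℕ) : STVB n := (u.map (rN n)).prod

def permL (n : ℕ) (u : List ℕ) : Equiv.Perm (Fin n) := (u.map (swpN n)).prod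

@[simp] theorem RL_nil : RL n [] = 1 := rfl
@[simp] theorem RL_cons {e : ℕ} {u : List ℕ} : RL n (e :: u) = rN n e * RL n u := by
  simp [RL]
theorem RL_append (u v : List ℕ) : RL n (u ++ v) = RL n u * RL n v := by
  simp [RL]
@[simp] theorem permL_nil : permL n [] = 1 := rfl
@[simp] theorem permL_cons {e : ℕ} {u : List ℕ} :
    permL n (e :: u) = swpN n e * permL n u := by simp [permL]
theorem permL_append (u v : List ℕ) : permL n (u ++ v) = permL n u * permL n v := by
  simp [permL]

theorem RL_rev_mul (u : List ℕ) : RL n u.reverse * RL n u = 1 := by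
  induction u with
  | nil => simp
  | cons e t ih =>
      rw [List.reverse_cons, RL_append, RL_cons]
      calc RL n t.reverse * RL n [e] * (rN n e * RL n t)
          = RL n t.reverse * (RL n [e] * rN n e) * RL n t := by simp only [mul_assoc]
        _ = RL n t.reverse * RL n t := by
            rw [show RL n [e] = rN n e from by simp [RL], r_sq, mul_one]
        _ = 1 := ih

theorem RL_mul_rev (u : List ℕ) : RL n u * RL n u.reverse = 1 := by
  have := RL_rev_mul (n := n) u.reverse
  rwa [List.reverse_reverse] at this

theorem permL_rev_mul (u : List ℕ) : permL n u.reverse * permL n u = 1 := by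
  induction u with
  | nil => simp
  | cons e t ih =>
      rw [List.reverse_cons, permL_append, permL_cons]
      calc permL n t.reverse * permL n [e] * (swpN n e * permL n t)
          = permL n t.reverse * (permL n [e] * swpN n e) * permL n t := by
            simp only [mul_assoc]
        _ = permL n t.reverse * permL n t := by
            rw [show permL n [e] = swpN n e from by simp [permL], swpN_sq, mul_one]
        _ = 1 := ih

theorem permL_rev (u : List ℕ) : permL n u.reverse = (permL n u)⁻¹ :=
  eq_inv_of_mul_eq_one_left (permL_rev_mul u)

/-- passing a far ρ through a ρ-list. -/
theorem r_RL_far {i : ℕ} {u : List ℕ} (h : ∀ e ∈ u, FarN i e) :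
    rN n i * RL n u = RL n u * rN n i := by
  induction u with
  | nil => simp
  | cons e t ih =>
      rw [RL_cons, ← mul_assoc, rr_far (h e (by simp)), mul_assoc,
        ih (fun x hx => h x (by simp [hx])), ← mul_assoc]

theorem swpN_comm_far {i e : ℕ} (h : FarN i e) :
    swpN n i * swpN n e = swpN n e * swpN n i := by
  by_cases hi : i < n - 1
  · by_cases he : e < n - 1
    · rw [swpN_in hi, swpN_in he]
      unfold swp
      have key : Equiv.swap (fa ⟨e, he⟩) (fb ⟨e, he⟩) *
          Equiv.swap (fa ⟨i, hi⟩) (fb ⟨i, hi⟩) *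
          (Equiv.swap (fa ⟨e, he⟩) (fb ⟨e, he⟩))⁻¹ =
          Equiv.swap (fa ⟨i, hi⟩) (fb ⟨i, hi⟩) := by
        rw [← Equiv.swap_apply_apply]
        rw [Equiv.swap_apply_of_ne_of_ne, Equiv.swap_apply_of_ne_of_ne]
        all_goals
          intro hc
          have hval := congrArg Fin.val hc
          simp [fa, fb] at hval
          rcases h with h | h <;> omega
      calc Equiv.swap (fa ⟨i, hi⟩) (fb ⟨i, hi⟩) * Equiv.swap (fa ⟨e, he⟩) (fb ⟨e, he⟩)
          = (Equiv.swap (fa ⟨e, he⟩) (fb ⟨e, he⟩) *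
              Equiv.swap (fa ⟨i, hi⟩) (fb ⟨i, hi⟩) *
              (Equiv.swap (fa ⟨e, he⟩) (fb ⟨e, he⟩))⁻¹) *
            Equiv.swap (fa ⟨e, he⟩) (fb ⟨e, he⟩) := by
            rw [key]
        _ = Equiv.swap (fa ⟨e, he⟩) (fb ⟨e, he⟩) *
            Equiv.swap (fa ⟨i, hi⟩) (fb ⟨i, hi⟩) := by
            simp [mul_assoc]
    · rw [swpN_out he, one_mul, mul_one]
  · rw [swpN_out hi, one_mul, mul_one]

theorem swpN_permL_far {i : ℕ} {u : List ℕ} (h : ∀ e ∈ u, FarN i e) :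
    swpN n i * permL n u = permL n u * swpN n i := by
  induction u with
  | nil => simp
  | cons e t ih =>
      rw [permL_cons, ← mul_assoc, swpN_comm_far (h e (by simp)), mul_assoc,
        ih (fun x hx => h x (by simp [hx])), ← mul_assoc]

end TVP
end SingTVB
namespace SingTVB
namespace TVP

variable {n : ℕ}

theorem RL_range'_split {j b i : ℕ} (hj : j < i) (hi : i < j + b) :
    List.range' j b = List.range' j (i - 1 - j) ++ [i - 1, i] ++
      List.range' (i + 1) (j + b - (i + 1)) := by
  have h1 : List.range' j (i - 1 - j) ++ List.range' (j + (i - 1 - j)) 2 =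
      List.range' j (2 + (i - 1 - j)) := by
    rw [List.range'_append_1, Nat.add_comm (i - 1 - j)]
  have h2 : List.range' j (2 + (i - 1 - j)) ++
      List.range' (j + (2 + (i - 1 - j))) (j + b - (i + 1)) =
      List.range' j ((j + b - (i + 1)) + (2 + (i - 1 - j))) := by
    rw [List.range'_append_1, Nat.add_comm (2 + (i - 1 - j))]
  have e1 : j + (i - 1 - j) = i - 1 := by omega
  have e2 : j + (2 + (i - 1 - j)) = i + 1 := by omega
  have e3 : (j + b - (i + 1)) + (2 + (i - 1 - j)) = b := by omega
  have e4 : List.range' (i - 1) 2 = [i - 1, i] := by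
    have : i - 1 + 1 = i := by omega
    simp [List.range'_succ, this]
  rw [e1, e4] at h1
  rw [e3] at h2
  rw [← h2, ← h1, e2]

theorem row_pass {j b i : ℕ} (hj : j < i) (hi : i < j + b) (hb : j + b ≤ n - 1) :
    rN n i * RL n (List.range' j b) = RL n (List.range' j b) * rN n (i - 1) := by
  rw [RL_range'_split hj hi]
  rw [RL_append, RL_append]
  have hfar1 : ∀ e ∈ List.range' j (i - 1 - j), FarN i e := by
    intro e he
    rw [List.mem_range'_1] at he
    right; omega
  have hfar2 : ∀ e ∈ List.range' (i + 1) (j + b - (i + 1)), FarN (i - 1) e := by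
    intro e he
    rw [List.mem_range'_1] at he
    left; omega
  have hmid : RL n [i - 1, i] = rN n (i - 1) * rN n i := by simp [RL]
  have hbraid : rN n i * (rN n (i - 1) * rN n i) =
      rN n (i - 1) * rN n i * rN n (i - 1) := by
    have h' : (i - 1) + 1 < n - 1 := by omega
    have e : (i - 1) + 1 = i := by omega
    have h3 := rrr_braid (n := n) (i := i - 1) h'
    rw [e] at h3
    rw [h3]
    simp only [mul_assoc]
  calc rN n i * (RL n (List.range' j (i - 1 - j)) * RL n [i - 1, i] *
        RL n (List.range' (i + 1) (j + b - (i + 1))))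
      = (rN n i * RL n (List.range' j (i - 1 - j))) * RL n [i - 1, i] *
        RL n (List.range' (i + 1) (j + b - (i + 1))) := by simp only [mul_assoc]
    _ = RL n (List.range' j (i - 1 - j)) * (rN n i * RL n [i - 1, i]) *
        RL n (List.range' (i + 1) (j + b - (i + 1))) := by
        rw [r_RL_far hfar1]; simp only [mul_assoc]
    _ = RL n (List.range' j (i - 1 - j)) * (RL n [i - 1, i] * rN n (i - 1)) *
        RL n (List.range' (i + 1) (j + b - (i + 1))) := by
        rw [hmid, hbraid]
    _ = RL n (List.range' j (i - 1 - j)) * RL n [i - 1, i] *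
        (rN n (i - 1) * RL n (List.range' (i + 1) (j + b - (i + 1)))) := by
        simp only [mul_assoc]
    _ = RL n (List.range' j (i - 1 - j)) * RL n [i - 1, i] *
        RL n (List.range' (i + 1) (j + b - (i + 1))) * rN n (i - 1) := by
        rw [r_RL_far hfar2]; simp only [mul_assoc]

theorem row_pass_rev {j b i : ℕ} (hj : j < i) (hi : i < j + b) (hb : j + b ≤ n - 1) :
    rN n (i - 1) * RL n (List.range' j b).reverse =
      RL n (List.range' j b).reverse * rN n i := by
  have h1 := row_pass (n := n) hj hi hb
  set u := RL n (List.range' j b) with hu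
  set v := RL n (List.range' j b).reverse with hv
  have hvu : v * u = 1 := RL_rev_mul _
  have huv : u * v = 1 := RL_mul_rev _
  calc rN n (i - 1) * v = (v * u) * rN n (i - 1) * v := by rw [hvu, one_mul]
    _ = v * (u * rN n (i - 1)) * v := by simp only [mul_assoc]
    _ = v * (rN n i * u) * v := by rw [← h1]
    _ = v * rN n i * (u * v) := by simp only [mul_assoc]
    _ = v * rN n i := by rw [huv, mul_one]

end TVP
end SingTVB
namespace SingTVB
namespace TVP

variable {n : ℕ}

def cyc (n j b : ℕ) : Equiv.Perm (Fin n) := permL n (List.range' j b)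

@[simp] theorem cyc_zero {j : ℕ} : cyc n j 0 = 1 := rfl

theorem cyc_succ {j b : ℕ} : cyc n j (b + 1) = swpN n j * cyc n (j + 1) b := by
  rw [cyc, List.range'_succ, permL_cons]; rfl

theorem swpN_fix {i : ℕ} (x : Fin n) (h1 : x.val ≠ i) (h2 : x.val ≠ i + 1) :
    (swpN n i) x = x := by
  by_cases h : i < n - 1
  · apply Fin.ext
    rw [swpN_apply h, if_neg h1, if_neg h2]
  · rw [swpN_out h]; rfl

theorem cyc_fix_lt {j b : ℕ} (x : Fin n) (hx : x.val < j) : (cyc n j b) x = x := by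
  induction b generalizing j with
  | zero => rfl
  | succ b ih =>
      rw [cyc_succ, Equiv.Perm.mul_apply, ih (by omega)]
      exact swpN_fix x (by omega) (by omega)

theorem cyc_fix_gt {j b : ℕ} (x : Fin n) (hx : j + b < x.val) : (cyc n j b) x = x := by
  induction b generalizing j with
  | zero => rfl
  | succ b ih =>
      rw [cyc_succ, Equiv.Perm.mul_apply, ih (by omega)]
      exact swpN_fix x (by omega) (by omega)

theorem cyc_top {j b : ℕ} (x : Fin n) (hx : x.val = j + b) (hb : j + b ≤ n - 1) :
    ((cyc n j b) x).val = j := by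
  induction b generalizing j with
  | zero => simpa using hx
  | succ b ih =>
      rw [cyc_succ, Equiv.Perm.mul_apply]
      have hin : ((cyc n (j + 1) b) x).val = j + 1 := ih (j := j + 1) (by omega) (by omega)
      have hj : j < n - 1 := by omega
      rw [swpN_apply hj, hin, if_neg (by omega), if_pos rfl]

theorem cyc_mid {j b : ℕ} (x : Fin n) (h1 : j ≤ x.val) (h2 : x.val < j + b)
    (hb : j + b ≤ n - 1) : ((cyc n j b) x).val = x.val + 1 := by
  induction b generalizing j with
  | zero => omega
  | succ b ih =>
      rw [cyc_succ, Equiv.Perm.mul_apply]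
      have hj : j < n - 1 := by omega
      by_cases hxj : x.val = j
      · rw [cyc_fix_lt x (by omega), swpN_apply hj, if_pos hxj, hxj]
      · have hin : ((cyc n (j + 1) b) x).val = x.val + 1 := ih (j := j + 1) (by omega) (by omega) (by omega)
        rw [swpN_apply hj, hin, if_neg (by omega), if_neg (by omega)]

def Fixe (n m : ℕ) (p : Equiv.Perm (Fin n)) : Prop :=
  ∀ x : Fin n, m ≤ x.val → p x = x

def cwAux (n : ℕ) : ℕ → Equiv.Perm (Fin n) → List ℕ
  | 0, _ => []
  | m + 1, p =>
      if h : m < n then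
        List.range' ((p ⟨m, h⟩).val) (m - (p ⟨m, h⟩).val) ++
          cwAux n m ((cyc n ((p ⟨m, h⟩).val) (m - (p ⟨m, h⟩).val))⁻¹ * p)
      else cwAux n m p

theorem cwAux_succ {m : ℕ} (p : Equiv.Perm (Fin n)) (h : m < n) :
    cwAux n (m + 1) p = List.range' ((p ⟨m, h⟩).val) (m - (p ⟨m, h⟩).val) ++
      cwAux n m ((cyc n ((p ⟨m, h⟩).val) (m - (p ⟨m, h⟩).val))⁻¹ * p) := by
  rw [cwAux, dif_pos h]

theorem pm_le {m : ℕ} {p : Equiv.Perm (Fin n)} (hp : Fixe n (m + 1) p) (h : m < n) :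
    (p ⟨m, h⟩).val ≤ m := by
  by_contra hc
  push_neg at hc
  have h1 : p (p ⟨m, h⟩) = p ⟨m, h⟩ := hp _ (by omega)
  have h2 : p ⟨m, h⟩ = ⟨m, h⟩ := p.injective h1
  rw [h2] at hc
  simp at hc

theorem fix_step {m : ℕ} {p : Equiv.Perm (Fin n)} (hp : Fixe n (m + 1) p) (h : m < n) :
    Fixe n m ((cyc n ((p ⟨m, h⟩).val) (m - (p ⟨m, h⟩).val))⁻¹ * p) := by
  intro x hx
  have hjm : (p ⟨m, h⟩).val ≤ m := pm_le hp h
  rw [Equiv.Perm.mul_apply]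
  rcases Nat.lt_or_ge m x.val with hgt | hge
  · rw [hp x (by omega)]
    have hfix : (cyc n ((p ⟨m, h⟩).val) (m - (p ⟨m, h⟩).val)) x = x :=
      cyc_fix_gt x (by omega)
    calc (cyc n ((p ⟨m, h⟩).val) (m - (p ⟨m, h⟩).val))⁻¹ x
        = (cyc n ((p ⟨m, h⟩).val) (m - (p ⟨m, h⟩).val))⁻¹
            ((cyc n ((p ⟨m, h⟩).val) (m - (p ⟨m, h⟩).val)) x) := by rw [hfix]
      _ = x := by simp
  · have hxm : x = ⟨m, h⟩ := Fin.ext (show x.val = m by omega)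
    subst hxm
    have htop : (cyc n ((p ⟨m, h⟩).val) (m - (p ⟨m, h⟩).val)) ⟨m, h⟩ = p ⟨m, h⟩ := by
      apply Fin.ext
      rw [cyc_top _ (show (⟨m, h⟩ : Fin n).val = (p ⟨m, h⟩).val + (m - (p ⟨m, h⟩).val)
        by show m = _; omega) (by omega)]
    rw [Equiv.Perm.inv_eq_iff_eq]
    exact htop.symm

theorem permL_cwAux {m : ℕ} (hm : m ≤ n) {p : Equiv.Perm (Fin n)} (hp : Fixe n m p) :
    permL n (cwAux n m p) = p := by
  induction m generalizing p with
  | zero =>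
      have : p = 1 := Equiv.ext fun x => hp x (Nat.zero_le _)
      simp [cwAux, this]
  | succ m ih =>
      have h : m < n := by omega
      rw [cwAux_succ p h, permL_append,
        ih (by omega) (fix_step hp h)]
      have hc : permL n (List.range' ((p ⟨m, h⟩).val) (m - (p ⟨m, h⟩).val)) =
          cyc n ((p ⟨m, h⟩).val) (m - (p ⟨m, h⟩).val) := rfl
      rw [hc, mul_inv_cancel_left]

theorem cw_one : ∀ m : ℕ, cwAux n m (1 : Equiv.Perm (Fin n)) = [] := by
  intro m
  induction m with
  | zero => rfl
  | succ m ih =>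
      by_cases h : m < n
      · rw [cwAux_succ 1 h]
        have h1 : ((1 : Equiv.Perm (Fin n)) ⟨m, h⟩).val = m := rfl
        simp only [h1, Nat.sub_self, List.range'_zero, cyc_zero, inv_one, one_mul,
          List.nil_append, ih]
      · rw [cwAux, dif_neg h]; exact ih

theorem swpN_eq_swap {i : ℕ} (h : i < n - 1) {a b : Fin n} (ha : a.val = i)
    (hb : b.val = i + 1) : swpN n i = Equiv.swap a b := by
  rw [swpN_in h]
  have h1 : a = fa ⟨i, h⟩ := Fin.ext (by simp [fa, ha])
  have h2 : b = fb ⟨i, h⟩ := Fin.ext (by simp [fb, hb])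
  rw [h1, h2]
  rfl

theorem crux : ∀ m : ℕ, m ≤ n → ∀ p : Equiv.Perm (Fin n), Fixe n m p → ∀ i : ℕ,
    i + 1 < m → rN n i * RL n (cwAux n m p) = RL n (cwAux n m (swpN n i * p)) := by
  intro m
  induction m with
  | zero => intro _ p _ i hi; omega
  | succ m ih =>
      intro hmn p hp i hi
      have h : m < n := by omega
      have hjle : (p ⟨m, h⟩).val ≤ m := pm_le hp h
      have hiln : i < n - 1 := by omega
      have hqval : ((swpN n i * p) ⟨m, h⟩).val =
          if (p ⟨m, h⟩).val = i then i + 1 else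
            if (p ⟨m, h⟩).val = i + 1 then i else (p ⟨m, h⟩).val := by
        rw [Equiv.Perm.mul_apply, swpN_apply hiln]
      set j := (p ⟨m, h⟩).val with hjdef
      have hp1 : Fixe n m ((cyc n j (m - j))⁻¹ * p) := fix_step hp h
      rcases eq_or_ne j i with hji | hne1
      · -- j = i : cancellation case
        have hq : ((swpN n i * p) ⟨m, h⟩).val = i + 1 := by
          rw [hqval, if_pos hji]
        rw [cwAux_succ p h, cwAux_succ (swpN n i * p) h]
        simp only [← hjdef, hq]
        have hb : m - i = (m - (i + 1)) + 1 := by omega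
        have hrow : List.range' j (m - j) = i :: List.range' (i + 1) (m - (i + 1)) := by
          rw [hji, hb, List.range'_succ]
        have hcyc : cyc n j (m - j) = swpN n i * cyc n (i + 1) (m - (i + 1)) := by
          rw [hji, hb, cyc_succ]
        have hq1 : (cyc n j (m - j))⁻¹ * p =
            (cyc n (i + 1) (m - (i + 1)))⁻¹ * (swpN n i * p) := by
          rw [hcyc, mul_inv_rev, swpN_inv, mul_assoc]
        rw [hrow, hq1]
        simp only [RL_append, RL_cons]
        rw [← mul_assoc, ← mul_assoc, r_sq, one_mul]
      · rcases eq_or_ne j (i + 1) with hji' | hne2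
        · -- j = i + 1 : absorption case
          have hq : ((swpN n i * p) ⟨m, h⟩).val = i := by
            rw [hqval, if_neg (by omega), if_pos hji']
          rw [cwAux_succ p h, cwAux_succ (swpN n i * p) h]
          simp only [← hjdef, hq]
          have hb : m - i = (m - j) + 1 := by omega
          have hrow : List.range' i (m - i) = i :: List.range' j (m - j) := by
            rw [hb, List.range'_succ, hji']
          have hcyc : cyc n i (m - i) = swpN n i * cyc n j (m - j) := by
            rw [hb, cyc_succ, hji']
          have hq1 : (cyc n i (m - i))⁻¹ * (swpN n i * p) = (cyc n j (m - j))⁻¹ * p := by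
            rw [hcyc, mul_inv_rev, swpN_inv, mul_assoc, ← mul_assoc (swpN n i),
              swpN_sq, one_mul]
          rw [hrow, hq1]
          simp only [RL_append, RL_cons]
          simp only [mul_assoc]
        · -- j ∉ {i, i+1}
          have hq : ((swpN n i * p) ⟨m, h⟩).val = j := by
            rw [hqval, if_neg hne1, if_neg hne2]
          rw [cwAux_succ p h, cwAux_succ (swpN n i * p) h]
          simp only [← hjdef, hq]
          simp only [RL_append]
          rcases Nat.lt_or_ge (i + 1) j with hlt | hge
          · -- i + 1 < j : far case
            have hfar : ∀ e ∈ List.range' j (m - j), FarN i e := by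
              intro e he
              rw [List.mem_range'_1] at he
              left; omega
            have hcomm : Commute (swpN n i) (cyc n j (m - j)) := by
              unfold cyc
              exact swpN_permL_far (fun e he => by
                rw [List.mem_range'_1] at he
                left; omega)
            have hq1 : (cyc n j (m - j))⁻¹ * (swpN n i * p) =
                swpN n i * ((cyc n j (m - j))⁻¹ * p) := by
              rw [← mul_assoc, ← hcomm.inv_right.eq, mul_assoc]
            rw [hq1, ← ih (by omega) _ hp1 i (by omega)]
            rw [← mul_assoc, r_RL_far hfar, mul_assoc]
          · -- j < i : reflection case
            have hji2 : j < i := by omega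
            have him : i < m := by omega
            have hrow := row_pass (n := n) (j := j) (b := m - j) (i := i)
              hji2 (by omega) (by omega)
            have hlt1 : i - 1 < n := by omega
            have hlt2 : i < n := by omega
            have hca : (cyc n j (m - j)) (⟨i - 1, hlt1⟩ : Fin n) = (⟨i, hlt2⟩ : Fin n) := by
              apply Fin.ext
              have hm := cyc_mid (n := n) (j := j) (b := m - j) (⟨i - 1, hlt1⟩ : Fin n)
                (show j ≤ i - 1 by omega) (show i - 1 < j + (m - j) by omega) (by omega)
              rw [hm]
              exact (by omega : i - 1 + 1 = i)
            have hcb : ((cyc n j (m - j)) (⟨i, hlt2⟩ : Fin n)).val = i + 1 := by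
              have hm := cyc_mid (n := n) (j := j) (b := m - j) (⟨i, hlt2⟩ : Fin n)
                (show j ≤ i by omega) (show i < j + (m - j) by omega) (by omega)
              rw [hm]
            have hkey : (cyc n j (m - j))⁻¹ * (swpN n i * p) =
                swpN n (i - 1) * ((cyc n j (m - j))⁻¹ * p) := by
              have hconj : cyc n j (m - j) * swpN n (i - 1) * (cyc n j (m - j))⁻¹ =
                  swpN n i := by
                rw [swpN_eq_swap (show i - 1 < n - 1 by omega)
                    (a := (⟨i - 1, hlt1⟩ : Fin n)) (b := (⟨i, hlt2⟩ : Fin n)) rfl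
                    (show i = i - 1 + 1 by omega),
                  swpN_eq_swap hiln
                    (a := (cyc n j (m - j)) (⟨i - 1, hlt1⟩ : Fin n))
                    (b := (cyc n j (m - j)) (⟨i, hlt2⟩ : Fin n))
                    (by rw [hca]) hcb]
                exact (Equiv.swap_apply_apply _ _ _).symm
              calc (cyc n j (m - j))⁻¹ * (swpN n i * p)
                  = (cyc n j (m - j))⁻¹ * ((cyc n j (m - j) * swpN n (i - 1) *
                      (cyc n j (m - j))⁻¹) * p) := by rw [hconj]
                _ = swpN n (i - 1) * ((cyc n j (m - j))⁻¹ * p) := by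
                    group
            rw [hkey, ← ih (by omega) _ hp1 (i - 1) (by omega)]
            rw [← mul_assoc, hrow, mul_assoc]

theorem RL_cw {u : List ℕ} (hu : ∀ e ∈ u, e + 1 < n) :
    RL n u = RL n (cwAux n n (permL n u)) := by
  induction u with
  | nil => simp [cw_one]
  | cons e t ih =>
      rw [RL_cons, permL_cons, ih (fun x hx => hu x (by simp [hx]))]
      exact crux n le_rfl (permL n t) (fun x hx => absurd hx (Nat.not_le.mpr x.isLt))
        e (hu e (by simp))

theorem RL_triv {u : List ℕ} (hu : ∀ e ∈ u, e + 1 < n) (hp : permL n u = 1) :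
    RL n u = 1 := by
  rw [RL_cw hu, hp, cw_one]
  rfl

end TVP
end SingTVB
namespace SingTVB
namespace TVP

theorem pivot2 {M : Type*} [Monoid M] {a b c d : M} (h : a * b = c * d) (x : M) :
    a * (b * x) = c * (d * x) := by
  rw [← mul_assoc, h, mul_assoc]

theorem pivot3 {M : Type*} [Monoid M] {a b c d e f : M} (h : a * b * c = d * e * f)
    (x : M) : a * (b * (c * x)) = d * (e * (f * x)) := by
  have h2 : a * b * c * x = d * e * f * x := by rw [h]
  simpa [mul_assoc] using h2

theorem pivot5 {M : Type*} [Monoid M] {a b c d e f : M} (h : a * b * c * d * e = f)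
    (x : M) : a * (b * (c * (d * (e * x)))) = f * x := by
  have h2 : a * b * c * d * e * x = f * x := by rw [h]
  simpa [mul_assoc] using h2

variable {n : ℕ}

theorem RL_concat {u : List ℕ} {x : ℕ} : RL n (u ++ [x]) = RL n u * rN n x := by
  rw [RL_append]
  simp [RL]

def rowL (a b : ℕ) : List ℕ := List.range' (a + 1) (b - 1 - a)

theorem mem_rowL {a b e : ℕ} (h : e ∈ rowL a b) : a + 1 ≤ e ∧ e < b - 1 - a + (a + 1) := by
  rw [rowL, List.mem_range'_1] at h
  omega

/-- `R(desc) * D a * R(asc)` : the general λ-shaped element. -/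
def lamGo (D : ℕ → STVB n) (a b : ℕ) : STVB n :=
  RL n (rowL a b).reverse * (D a * RL n (rowL a b))

theorem lamGo_adj (D : ℕ → STVB n) (a : ℕ) : lamGo D a (a + 1) = D a := by
  unfold lamGo rowL
  simp

section caseLemmas

variable {D : ℕ → STVB n}

/-- case `i+1 < a` or `b < i` : everything commutes. -/
theorem lamGo_far (hD : ∀ e a, FarN e a → rN n e * D a = D a * rN n e)
    {i a b : ℕ} (hab : a < b) (hfar : FarN i a)
    (hf2 : ∀ e ∈ rowL a b, FarN i e) :
    rN n i * lamGo D a b * rN n i = lamGo D a b := by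
  unfold lamGo
  have h1 : rN n i * RL n (rowL a b).reverse = RL n (rowL a b).reverse * rN n i :=
    r_RL_far (fun e he => hf2 e (List.mem_reverse.mp he))
  have h2 : rN n i * RL n (rowL a b) = RL n (rowL a b) * rN n i := r_RL_far hf2
  simp only [mul_assoc]
  rw [pivot2 h1, ← h2, pivot2 (hD i a hfar), one_pivot (r_sq (n := n) i)]

/-- case `i + 1 = a` : extend the row downward. -/
theorem lamGo_dag {i a b : ℕ} (hia : i + 1 = a) (hab : a < b) (hbn : b ≤ n - 1)
    (hdag : ∀ a, 0 < a → a < n - 1 →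
      rN n (a - 1) * D a * rN n (a - 1) = rN n a * D (a - 1) * rN n a) :
    rN n i * lamGo D a b * rN n i = lamGo D (a - 1) b := by
  unfold lamGo
  have hrow : rowL (a - 1) b = a :: rowL a b := by
    unfold rowL
    have h1 : b - 1 - (a - 1) = (b - 1 - a) + 1 := by omega
    have h2 : a - 1 + 1 = a := by omega
    rw [h1, h2, List.range'_succ]
  have hf2 : ∀ e ∈ rowL a b, FarN i e := by
    intro e he
    have := mem_rowL he
    left; omega
  have h1 : rN n i * RL n (rowL a b).reverse = RL n (rowL a b).reverse * rN n i :=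
    r_RL_far (fun e he => hf2 e (List.mem_reverse.mp he))
  have h2 : rN n i * RL n (rowL a b) = RL n (rowL a b) * rN n i := r_RL_far hf2
  have hd := hdag a (by omega) (by omega)
  rw [hrow]
  rw [show a - 1 = i by omega] at hd ⊢
  simp only [List.reverse_cons, RL_concat, RL_cons, mul_assoc]
  rw [pivot2 h1, ← h2, pivot3 hd]

/-- case `i = a`, `b = a + 1` : flip. -/
theorem lamGo_flip {a : ℕ} (han : a < n - 1) {E : ℕ → STVB n}
    (hflip : ∀ a, a < n - 1 → rN n a * D a * rN n a = E a) :
    rN n a * lamGo D a (a + 1) * rN n a = E a := by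
  rw [lamGo_adj]
  exact hflip a han

/-- case `i = a`, `a + 1 < b` : shrink the row at the bottom. -/
theorem lamGo_star {a b : ℕ} (hab : a + 1 < b) (hbn : b ≤ n - 1)
    (hstar : ∀ a, a + 1 < n - 1 →
      rN n a * rN n (a+1) * D a * rN n (a+1) * rN n a = D (a + 1)) :
    rN n a * lamGo D a b * rN n a = lamGo D (a + 1) b := by
  unfold lamGo
  have hrow : rowL a b = (a + 1) :: rowL (a + 1) b := by
    unfold rowL
    have h1 : b - 1 - a = (b - 1 - (a + 1)) + 1 := by omega
    rw [h1, List.range'_succ]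
  have hf2 : ∀ e ∈ rowL (a + 1) b, FarN a e := by
    intro e he
    have := mem_rowL he
    left; omega
  have h1 : rN n a * RL n (rowL (a + 1) b).reverse =
      RL n (rowL (a + 1) b).reverse * rN n a :=
    r_RL_far (fun e he => hf2 e (List.mem_reverse.mp he))
  have h2 : rN n a * RL n (rowL (a + 1) b) = RL n (rowL (a + 1) b) * rN n a :=
    r_RL_far hf2
  have hs := hstar a (by omega)
  rw [hrow]
  simp only [List.reverse_cons, RL_concat, RL_cons, mul_assoc]
  rw [pivot2 h1, ← h2, pivot5 hs]

/-- case `a < i`, `i + 1 < b` : pass through the rows. -/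
theorem lamGo_mid (hD : ∀ e a, FarN e a → rN n e * D a = D a * rN n e)
    {i a b : ℕ} (hai : a < i) (hib : i + 1 < b) (hbn : b ≤ n - 1) :
    rN n i * lamGo D a b * rN n i = lamGo D a b := by
  unfold lamGo
  have hrev : rN n i * RL n (rowL a b).reverse =
      RL n (rowL a b).reverse * rN n (i + 1) := by
    have h := row_pass_rev (n := n) (j := a + 1) (b := b - 1 - a) (i := i + 1)
      (by omega) (by omega) (by omega)
    rw [show i + 1 - 1 = i by omega] at h
    exact h
  have hfwd : rN n (i + 1) * RL n (rowL a b) = RL n (rowL a b) * rN n i := by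
    have h := row_pass (n := n) (j := a + 1) (b := b - 1 - a) (i := i + 1)
      (by omega) (by omega) (by omega)
    rw [show i + 1 - 1 = i by omega] at h
    exact h
  have hDc : rN n (i + 1) * D a = D a * rN n (i + 1) := hD (i + 1) a (by right; omega)
  simp only [mul_assoc]
  rw [pivot2 hrev, pivot2 hDc, pivot2 hfwd, r_sq, mul_one]

/-- case `i = b - 1 > a` : shrink the row at the top. -/
theorem lamGo_top1 {a b : ℕ} (hab : a + 1 < b) :
    rN n (b - 1) * lamGo D a b * rN n (b - 1) = lamGo D a (b - 1) := by
  unfold lamGo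
  have hrow : rowL a b = rowL a (b - 1) ++ [b - 1] := by
    unfold rowL
    have h1 : b - 1 - a = (b - 1 - 1 - a) + 1 := by omega
    rw [h1, List.range'_1_concat]
    congr 2
    omega
  rw [hrow]
  simp only [List.reverse_append, List.reverse_cons, List.reverse_nil, List.nil_append, List.singleton_append,
    RL_concat, RL_cons, RL_nil, mul_one, mul_assoc]
  rw [one_pivot (r_sq (n := n) (b - 1)), r_sq, mul_one]

/-- case `i = b` : extend the row at the top. -/
theorem lamGo_top2 {a b : ℕ} (hab : a < b) :
    rN n b * lamGo D a b * rN n b = lamGo D a (b + 1) := by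
  unfold lamGo
  have hrow : rowL a (b + 1) = rowL a b ++ [b] := by
    unfold rowL
    have h1 : b + 1 - 1 - a = (b - 1 - a) + 1 := by omega
    rw [h1, List.range'_1_concat]
    congr 2
    omega
  rw [hrow]
  simp only [List.reverse_append, List.reverse_cons, List.reverse_nil, List.nil_append, List.singleton_append,
    RL_concat, RL_cons, RL_nil, mul_one, mul_assoc]

end caseLemmas

end TVP
end SingTVB
namespace SingTVB
namespace TVP

variable {n : ℕ}

def swf (i k : ℕ) : ℕ := if k = i then i + 1 else if k = i + 1 then i else k

theorem swpN_val {i : ℕ} (hi : i < n - 1) (x : Fin n) :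
    ((swpN n i) x).val = swf i x.val := by
  rw [swpN_apply hi]; rfl

theorem swf_inj {i k l : ℕ} (h : k ≠ l) : swf i k ≠ swf i l := by
  unfold swf; split_ifs <;> omega

def lamPQ (B C : ℕ → STVB n) (k l : ℕ) : STVB n :=
  if k < l then lamGo B k l else lamGo C l k

theorem lamPQ_swap {B C : ℕ → STVB n} {x y : ℕ} (h : x ≠ y) :
    lamPQ C B x y = lamPQ B C y x := by
  unfold lamPQ
  rcases Nat.lt_trichotomy x y with h1 | h1 | h1
  · rw [if_pos h1, if_neg (by omega)]
  · omega
  · rw [if_neg (by omega), if_pos h1]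

section PQ

variable {X : ℕ → STVB n}
variable (hXfar : ∀ a e, FarN a e → X a * rN n e = rN n e * X a)
variable (hXbr : ∀ a, a + 1 < n - 1 →
  rN n a * X (a+1) * rN n a = rN n (a+1) * X a * rN n (a+1))

theorem farP (hXfar : ∀ a e, FarN a e → X a * rN n e = rN n e * X a)
    (e a : ℕ) (h : FarN e a) :
    rN n e * (rN n a * X a) = (rN n a * X a) * rN n e := by
  rw [← mul_assoc, rr_far (show FarN e a from h), mul_assoc,
    ← hXfar a e (by unfold FarN at *; omega), ← mul_assoc]

theorem farQ (hXfar : ∀ a e, FarN a e → X a * rN n e = rN n e * X a)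
    (e a : ℕ) (h : FarN e a) :
    rN n e * (X a * rN n a) = (X a * rN n a) * rN n e := by
  rw [← mul_assoc, ← hXfar a e (by unfold FarN at *; omega), mul_assoc,
    rr_far (show FarN e a from h), ← mul_assoc]

theorem flipP (a : ℕ) (ha : a < n - 1) :
    rN n a * (rN n a * X a) * rN n a = X a * rN n a := by
  simp only [mul_assoc]
  rw [one_pivot (r_sq (n := n) a)]

theorem flipQ (a : ℕ) (ha : a < n - 1) :
    rN n a * (X a * rN n a) * rN n a = rN n a * X a := by
  simp only [mul_assoc]
  rw [r_sq, mul_one]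

theorem dagP (hXbr : ∀ a, a + 1 < n - 1 →
      rN n a * X (a+1) * rN n a = rN n (a+1) * X a * rN n (a+1))
    (a : ℕ) (h0 : 0 < a) (ha : a < n - 1) :
    rN n (a-1) * (rN n a * X a) * rN n (a-1) =
      rN n a * (rN n (a-1) * X (a-1)) * rN n a := by
  have e : a - 1 + 1 = a := by omega
  have rb := rrr_braid (n := n) (i := a - 1) (by omega)
  have xb := hXbr (a - 1) (by omega)
  rw [e] at rb xb
  calc rN n (a-1) * (rN n a * X a) * rN n (a-1)
      = (rN n (a-1) * rN n a * rN n (a-1)) * (rN n (a-1) * X a * rN n (a-1)) := by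
        simp only [mul_assoc]
        rw [one_pivot (r_sq (n := n) (a-1))]
    _ = (rN n a * rN n (a-1) * rN n a) * (rN n a * X (a-1) * rN n a) := by
        rw [rb, xb]
    _ = rN n a * (rN n (a-1) * X (a-1)) * rN n a := by
        simp only [mul_assoc]
        rw [one_pivot (r_sq (n := n) a)]

theorem dagQ (hXbr : ∀ a, a + 1 < n - 1 →
      rN n a * X (a+1) * rN n a = rN n (a+1) * X a * rN n (a+1))
    (a : ℕ) (h0 : 0 < a) (ha : a < n - 1) :
    rN n (a-1) * (X a * rN n a) * rN n (a-1) =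
      rN n a * (X (a-1) * rN n (a-1)) * rN n a := by
  have e : a - 1 + 1 = a := by omega
  have rb := rrr_braid (n := n) (i := a - 1) (by omega)
  have xb := hXbr (a - 1) (by omega)
  rw [e] at rb xb
  calc rN n (a-1) * (X a * rN n a) * rN n (a-1)
      = (rN n (a-1) * X a * rN n (a-1)) * (rN n (a-1) * rN n a * rN n (a-1)) := by
        simp only [mul_assoc]
        rw [one_pivot (r_sq (n := n) (a-1))]
    _ = (rN n a * X (a-1) * rN n a) * (rN n a * rN n (a-1) * rN n a) := by
        rw [rb, xb]
    _ = rN n a * (X (a-1) * rN n (a-1)) * rN n a := by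
        simp only [mul_assoc]
        rw [one_pivot (r_sq (n := n) a)]

theorem braid3 {a : ℕ} (ha : a + 1 < n - 1) :
    rN n a * (rN n (a+1) * rN n a) = rN n (a+1) * (rN n a * rN n (a+1)) := by
  have := rrr_braid (n := n) (i := a) ha
  simpa [mul_assoc] using this

theorem starP (hXbr : ∀ a, a + 1 < n - 1 →
      rN n a * X (a+1) * rN n a = rN n (a+1) * X a * rN n (a+1))
    (a : ℕ) (ha : a + 1 < n - 1) :
    rN n a * rN n (a+1) * (rN n a * X a) * rN n (a+1) * rN n a =
      rN n (a+1) * X (a+1) := by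
  have xb' : ∀ x : STVB n, rN n (a+1) * (X a * (rN n (a+1) * x)) =
      rN n a * (X (a+1) * (rN n a * x)) := fun x => pivot3 (hXbr a ha).symm x
  simp only [mul_assoc]
  rw [pivot3 (rrr_braid (n := n) ha), xb', one_pivot (r_sq (n := n) a), r_sq, mul_one]

theorem starQ (hXbr : ∀ a, a + 1 < n - 1 →
      rN n a * X (a+1) * rN n a = rN n (a+1) * X a * rN n (a+1))
    (a : ℕ) (ha : a + 1 < n - 1) :
    rN n a * rN n (a+1) * (X a * rN n a) * rN n (a+1) * rN n a =
      X (a+1) * rN n (a+1) := by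
  have xb' : ∀ x : STVB n, rN n (a+1) * (X a * (rN n (a+1) * x)) =
      rN n a * (X (a+1) * (rN n a * x)) := fun x => pivot3 (hXbr a ha).symm x
  simp only [mul_assoc]
  rw [braid3 ha, xb', one_pivot (r_sq (n := n) a), one_pivot (r_sq (n := n) a)]

end PQ

theorem lamGo_conj_aux {B C : ℕ → STVB n}
    (hBfar : ∀ e a, FarN e a → rN n e * B a = B a * rN n e)
    (hflipB : ∀ a, a < n - 1 → rN n a * B a * rN n a = C a)
    (hdagB : ∀ a, 0 < a → a < n - 1 →
      rN n (a-1) * B a * rN n (a-1) = rN n a * B (a-1) * rN n a)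
    (hstarB : ∀ a, a + 1 < n - 1 →
      rN n a * rN n (a+1) * B a * rN n (a+1) * rN n a = B (a+1))
    {i a b : ℕ} (hi : i < n - 1) (hb : b < n) (hab : a < b) :
    rN n i * lamGo B a b * rN n i = lamPQ B C (swf i a) (swf i b) := by
  by_cases h1 : i + 1 < a
  · have ha' : swf i a = a := by unfold swf; rw [if_neg (by omega), if_neg (by omega)]
    have hb' : swf i b = b := by unfold swf; rw [if_neg (by omega), if_neg (by omega)]
    rw [ha', hb', show lamPQ B C a b = lamGo B a b from by unfold lamPQ; rw [if_pos hab]]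
    exact lamGo_far hBfar hab (Or.inl h1)
      (fun e he => by have := mem_rowL he; left; omega)
  by_cases h2 : i + 1 = a
  · have ha' : swf i a = a - 1 := by
      unfold swf; rw [if_neg (by omega), if_pos (by omega)]; omega
    have hb' : swf i b = b := by unfold swf; rw [if_neg (by omega), if_neg (by omega)]
    rw [ha', hb', show lamPQ B C (a-1) b = lamGo B (a-1) b from by
      unfold lamPQ; rw [if_pos (by omega)]]
    exact lamGo_dag h2 hab (by omega) hdagB
  by_cases h3 : i = a
  · by_cases h4 : b = a + 1
    · have ha' : swf i a = a + 1 := by unfold swf; rw [if_pos (by omega)]; omega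
      have hb' : swf i b = a := by
        unfold swf; rw [if_neg (by omega), if_pos (by omega)]; omega
      rw [ha', hb', show lamPQ B C (a+1) a = lamGo C a (a+1) from by
        unfold lamPQ; rw [if_neg (by omega)], h3, h4]
      rw [lamGo_adj, lamGo_adj]
      exact hflipB a (by omega)
    · have ha' : swf i a = a + 1 := by unfold swf; rw [if_pos (by omega)]; omega
      have hb' : swf i b = b := by unfold swf; rw [if_neg (by omega), if_neg (by omega)]
      rw [ha', hb', show lamPQ B C (a+1) b = lamGo B (a+1) b from by
        unfold lamPQ; rw [if_pos (by omega)], h3]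
      exact lamGo_star (by omega) (by omega) hstarB
  by_cases h5 : i + 1 < b
  · have ha' : swf i a = a := by unfold swf; rw [if_neg (by omega), if_neg (by omega)]
    have hb' : swf i b = b := by unfold swf; rw [if_neg (by omega), if_neg (by omega)]
    rw [ha', hb', show lamPQ B C a b = lamGo B a b from by unfold lamPQ; rw [if_pos hab]]
    exact lamGo_mid hBfar (by omega) h5 (by omega)
  by_cases h6 : i + 1 = b
  · have ha' : swf i a = a := by unfold swf; rw [if_neg (by omega), if_neg (by omega)]
    have hb' : swf i b = b - 1 := by
      unfold swf; rw [if_neg (by omega), if_pos (by omega)]; omega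
    rw [ha', hb', show lamPQ B C a (b-1) = lamGo B a (b-1) from by
      unfold lamPQ; rw [if_pos (by omega)], show i = b - 1 by omega]
    exact lamGo_top1 (by omega)
  by_cases h7 : i = b
  · have ha' : swf i a = a := by unfold swf; rw [if_neg (by omega), if_neg (by omega)]
    have hb' : swf i b = b + 1 := by unfold swf; rw [if_pos (by omega)]; omega
    rw [ha', hb', show lamPQ B C a (b+1) = lamGo B a (b+1) from by
      unfold lamPQ; rw [if_pos (by omega)], h7]
    exact lamGo_top2 hab
  · have ha' : swf i a = a := by unfold swf; rw [if_neg (by omega), if_neg (by omega)]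
    have hb' : swf i b = b := by unfold swf; rw [if_neg (by omega), if_neg (by omega)]
    rw [ha', hb', show lamPQ B C a b = lamGo B a b from by unfold lamPQ; rw [if_pos hab]]
    exact lamGo_far hBfar hab (Or.inr (by omega))
      (fun e he => by have := mem_rowL he; right; omega)

theorem lamPQ_conj {B C : ℕ → STVB n}
    (hBfar : ∀ e a, FarN e a → rN n e * B a = B a * rN n e)
    (hCfar : ∀ e a, FarN e a → rN n e * C a = C a * rN n e)
    (hflipB : ∀ a, a < n - 1 → rN n a * B a * rN n a = C a)
    (hflipC : ∀ a, a < n - 1 → rN n a * C a * rN n a = B a)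
    (hdagB : ∀ a, 0 < a → a < n - 1 →
      rN n (a-1) * B a * rN n (a-1) = rN n a * B (a-1) * rN n a)
    (hdagC : ∀ a, 0 < a → a < n - 1 →
      rN n (a-1) * C a * rN n (a-1) = rN n a * C (a-1) * rN n a)
    (hstarB : ∀ a, a + 1 < n - 1 →
      rN n a * rN n (a+1) * B a * rN n (a+1) * rN n a = B (a+1))
    (hstarC : ∀ a, a + 1 < n - 1 →
      rN n a * rN n (a+1) * C a * rN n (a+1) * rN n a = C (a+1))
    {i k l : ℕ} (hi : i < n - 1) (hk : k < n) (hl : l < n) (hkl : k ≠ l) :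
    rN n i * lamPQ B C k l * rN n i = lamPQ B C (swf i k) (swf i l) := by
  rcases Nat.lt_or_ge k l with h | h
  · rw [show lamPQ B C k l = lamGo B k l from by unfold lamPQ; rw [if_pos h]]
    exact lamGo_conj_aux hBfar hflipB hdagB hstarB hi hl h
  · have h' : l < k := by omega
    rw [show lamPQ B C k l = lamGo C l k from by unfold lamPQ; rw [if_neg (by omega)]]
    rw [lamGo_conj_aux hCfar hflipC hdagC hstarC hi hk h',
      lamPQ_swap (swf_inj (by omega))]

end TVP
end SingTVB
namespace SingTVB
namespace TVP

variable {n : ℕ}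

theorem mkS_Wr (k : ℕ) : mkS n (WrN n k) = rN n k := rfl
theorem mkS_Ws (k : ℕ) : mkS n (WsN n k) = sN n k := rfl
theorem mkS_Wsb (k : ℕ) : mkS n (WsbN n k) = sbN n k := rfl
theorem mkS_Wt (k : ℕ) : mkS n (WtN n k) = tN n k := rfl

theorem mkS_desc (a b : ℕ) : mkS n (desc n a b) = RL n (rowL a b).reverse := by
  unfold desc rowL RL
  rw [map_list_prod, List.map_map]
  rfl

theorem mkS_asc (a b : ℕ) : mkS n (asc n a b) = RL n (rowL a b) := by
  unfold asc rowL RL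
  rw [map_list_prod, List.map_map]
  rfl

/-- base families -/
def Blam (n : ℕ) : ℕ → STVB n := fun a => rN n a * sbN n a
def Clam (n : ℕ) : ℕ → STVB n := fun a => sbN n a * rN n a
def Bbar (n : ℕ) : ℕ → STVB n := fun a => sN n a * rN n a
def Cbar (n : ℕ) : ℕ → STVB n := fun a => rN n a * sN n a
def By (n : ℕ) : ℕ → STVB n := fun a => tN n a * rN n a
def Cy (n : ℕ) : ℕ → STVB n := fun a => rN n a * tN n a

theorem lam_eq (k l : Fin n) :
    lam n k l = lamPQ (Blam n) (Clam n) k.val l.val := by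
  unfold lam lamW lamPQ lamGo Blam Clam
  by_cases h : (k : ℕ) < (l : ℕ)
  · rw [if_pos h, if_pos h]
    simp only [map_mul, mkS_desc, mkS_asc, mkS_Wr, mkS_Wsb]
    simp only [mul_assoc]
  · rw [if_neg h, if_neg h]
    simp only [map_mul, mkS_desc, mkS_asc, mkS_Wr, mkS_Wsb]
    simp only [mul_assoc]
    rw [one_pivot (r_sq (n := n) l.val)]

theorem lamBar_eq (k l : Fin n) :
    lamBar n k l = lamPQ (Bbar n) (Cbar n) k.val l.val := by
  unfold lamBar lamBarW lamPQ lamGo Bbar Cbar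
  by_cases h : (k : ℕ) < (l : ℕ)
  · rw [if_pos h, if_pos h]
    simp only [map_mul, mkS_desc, mkS_asc, mkS_Wr, mkS_Ws]
    simp only [mul_assoc]
  · rw [if_neg h, if_neg h]
    simp only [map_mul, mkS_desc, mkS_asc, mkS_Wr, mkS_Ws]
    simp only [mul_assoc]
    rw [one_pivot (r_sq (n := n) l.val)]

theorem yel_eq (k l : Fin n) :
    yel n k l = lamPQ (By n) (Cy n) k.val l.val := by
  unfold yel yW lamPQ lamGo By Cy
  by_cases h : (k : ℕ) < (l : ℕ)
  · rw [if_pos h, if_pos h]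
    simp only [map_mul, mkS_desc, mkS_asc, mkS_Wr, mkS_Wt]
    simp only [mul_assoc]
  · rw [if_neg h, if_neg h]
    simp only [map_mul, mkS_desc, mkS_asc, mkS_Wr, mkS_Wt]
    simp only [mul_assoc]
    rw [one_pivot (r_sq (n := n) l.val)]

/-- conjugation of `lam` by a single ρ. -/
theorem lam_conj {i : ℕ} (hi : i < n - 1) {k l : Fin n} (hkl : k ≠ l) :
    rN n i * lam n k l * rN n i = lam n ((swpN n i) k) ((swpN n i) l) := by
  rw [lam_eq, lam_eq, swpN_val hi, swpN_val hi]
  exact lamPQ_conj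
    (fun e a h => farP (fun a e h => sbr_far h) e a h)
    (fun e a h => farQ (fun a e h => sbr_far h) e a h)
    (fun a ha => flipP a ha)
    (fun a ha => flipQ a ha)
    (fun a h0 ha => dagP (fun a ha => rsbr_braid ha) a h0 ha)
    (fun a h0 ha => dagQ (fun a ha => rsbr_braid ha) a h0 ha)
    (fun a ha => starP (fun a ha => rsbr_braid ha) a ha)
    (fun a ha => starQ (fun a ha => rsbr_braid ha) a ha)
    hi k.isLt l.isLt (fun hc => hkl (Fin.ext hc))

theorem lamBar_conj {i : ℕ} (hi : i < n - 1) {k l : Fin n} (hkl : k ≠ l) :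
    rN n i * lamBar n k l * rN n i = lamBar n ((swpN n i) k) ((swpN n i) l) := by
  rw [lamBar_eq, lamBar_eq, swpN_val hi, swpN_val hi]
  exact lamPQ_conj
    (fun e a h => farQ (fun a e h => sr_far h) e a h)
    (fun e a h => farP (fun a e h => sr_far h) e a h)
    (fun a ha => flipQ a ha)
    (fun a ha => flipP a ha)
    (fun a h0 ha => dagQ (fun a ha => rsr_braid ha) a h0 ha)
    (fun a h0 ha => dagP (fun a ha => rsr_braid ha) a h0 ha)
    (fun a ha => starQ (fun a ha => rsr_braid ha) a ha)
    (fun a ha => starP (fun a ha => rsr_braid ha) a ha)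
    hi k.isLt l.isLt (fun hc => hkl (Fin.ext hc))

theorem yel_conj {i : ℕ} (hi : i < n - 1) {k l : Fin n} (hkl : k ≠ l) :
    rN n i * yel n k l * rN n i = yel n ((swpN n i) k) ((swpN n i) l) := by
  rw [yel_eq, yel_eq, swpN_val hi, swpN_val hi]
  exact lamPQ_conj
    (fun e a h => farQ (fun a e h => tr_far h) e a h)
    (fun e a h => farP (fun a e h => tr_far h) e a h)
    (fun a ha => flipQ a ha)
    (fun a ha => flipP a ha)
    (fun a h0 ha => dagQ (fun a ha => rtr_braid ha) a h0 ha)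
    (fun a h0 ha => dagP (fun a ha => rtr_braid ha) a h0 ha)
    (fun a ha => starQ (fun a ha => rtr_braid ha) a ha)
    (fun a ha => starP (fun a ha => rtr_braid ha) a ha)
    hi k.isLt l.isLt (fun hc => hkl (Fin.ext hc))

theorem conj_to_comm {e : ℕ} {x y : STVB n} (h : rN n e * x * rN n e = y) :
    rN n e * x = y * rN n e := by
  calc rN n e * x = rN n e * x * (rN n e * rN n e) := by rw [r_sq, mul_one]
    _ = (rN n e * x * rN n e) * rN n e := by simp only [mul_assoc]
    _ = y * rN n e := by rw [h]

/-- list-conjugation lemmas -/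
theorem RL_conj_lam {u : List ℕ} (hu : ∀ e ∈ u, e < n - 1) {k l : Fin n} (hkl : k ≠ l) :
    RL n u * lam n k l = lam n (permL n u k) (permL n u l) * RL n u := by
  induction u with
  | nil => simp
  | cons e t ih =>
      have he := hu e (by simp)
      have h2 : (permL n t) k ≠ (permL n t) l := (Equiv.injective _).ne hkl
      rw [RL_cons, mul_assoc, ih (fun x hx => hu x (by simp [hx])), ← mul_assoc,
        conj_to_comm (lam_conj he h2), permL_cons]
      simp only [Equiv.Perm.mul_apply, mul_assoc]

theorem RL_conj_lamBar {u : List ℕ} (hu : ∀ e ∈ u, e < n - 1) {k l : Fin n}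
    (hkl : k ≠ l) :
    RL n u * lamBar n k l = lamBar n (permL n u k) (permL n u l) * RL n u := by
  induction u with
  | nil => simp
  | cons e t ih =>
      have he := hu e (by simp)
      have h2 : (permL n t) k ≠ (permL n t) l := (Equiv.injective _).ne hkl
      rw [RL_cons, mul_assoc, ih (fun x hx => hu x (by simp [hx])), ← mul_assoc,
        conj_to_comm (lamBar_conj he h2), permL_cons]
      simp only [Equiv.Perm.mul_apply, mul_assoc]

theorem RL_conj_yel {u : List ℕ} (hu : ∀ e ∈ u, e < n - 1) {k l : Fin n} (hkl : k ≠ l) :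
    RL n u * yel n k l = yel n (permL n u k) (permL n u l) * RL n u := by
  induction u with
  | nil => simp
  | cons e t ih =>
      have he := hu e (by simp)
      have h2 : (permL n t) k ≠ (permL n t) l := (Equiv.injective _).ne hkl
      rw [RL_cons, mul_assoc, ih (fun x hx => hu x (by simp [hx])), ← mul_assoc,
        conj_to_comm (yel_conj he h2), permL_cons]
      simp only [Equiv.Perm.mul_apply, mul_assoc]

theorem RL_conj_gam {u : List ℕ} (hu : ∀ e ∈ u, e < n - 1) (j : Fin n) :
    RL n u * gamE n j = gamE n (permL n u j) * RL n u := by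
  induction u with
  | nil => simp
  | cons e t ih =>
      have he := hu e (by simp)
      rw [RL_cons, mul_assoc, ih (fun x hx => hu x (by simp [hx])), ← mul_assoc,
        rg_comm he, permL_cons]
      simp only [Equiv.Perm.mul_apply, mul_assoc]

/-- decompositions of the generators -/
theorem sig_decomp (i : Fin (n - 1)) :
    mkS n (Ws i) = lamBar n (fa i) (fb i) * rN n i.val := by
  have h1 : mkS n (Ws i) = sN n i.val := (sN_in i.isLt).symm
  rw [h1, lamBar_eq]
  show _ = lamPQ (Bbar n) (Cbar n) i.val (i.val + 1) * rN n i.val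
  rw [show lamPQ (Bbar n) (Cbar n) i.val (i.val + 1) =
      lamGo (Bbar n) i.val (i.val + 1) from by
    unfold lamPQ; rw [if_pos (Nat.lt_succ_self _)], lamGo_adj]
  show sN n i.val = sN n i.val * rN n i.val * rN n i.val
  rw [mul_assoc, r_sq, mul_one]

theorem sigb_decomp (i : Fin (n - 1)) :
    mkS n (Wsb i) = lam n (fb i) (fa i) * rN n i.val := by
  have h1 : mkS n (Wsb i) = sbN n i.val := (sbN_in i.isLt).symm
  rw [h1, lam_eq]
  show _ = lamPQ (Blam n) (Clam n) (i.val + 1) i.val * rN n i.val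
  rw [show lamPQ (Blam n) (Clam n) (i.val + 1) i.val =
      lamGo (Clam n) i.val (i.val + 1) from by
    unfold lamPQ; rw [if_neg (by omega)], lamGo_adj]
  show sbN n i.val = sbN n i.val * rN n i.val * rN n i.val
  rw [mul_assoc, r_sq, mul_one]

theorem tau_decomp (i : Fin (n - 1)) :
    mkS n (Wt i) = yel n (fa i) (fb i) * rN n i.val := by
  have h1 : mkS n (Wt i) = tN n i.val := (tN_in i.isLt).symm
  rw [h1, yel_eq]
  show _ = lamPQ (By n) (Cy n) i.val (i.val + 1) * rN n i.val
  rw [show lamPQ (By n) (Cy n) i.val (i.val + 1) =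
      lamGo (By n) i.val (i.val + 1) from by
    unfold lamPQ; rw [if_pos (Nat.lt_succ_self _)], lamGo_adj]
  show tN n i.val = tN n i.val * rN n i.val * rN n i.val
  rw [mul_assoc, r_sq, mul_one]

end TVP
end SingTVB
namespace SingTVB
namespace TVP

variable {n : ℕ}

theorem permL_single {x : ℕ} : permL n [x] = swpN n x := by simp [permL]

end TVP
end SingTVB

open SingTVB.TVP

open SingTVB in
/-- the singular twisted virtual pure braid monoid `STVP n = φ₁⁻¹(1)` is
generated, as a monoid, by the elements `λ_{k,l}`, `λ̄_{k,l}`, `y_{k,l}` (`k ≠ l`) and the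
`γ_j`. -/
theorem stvp_generators (n : ℕ) (hn : 2 ≤ n) (φ : STVB n →* Equiv.Perm (Fin n))
    (hs : ∀ i : Fin (n - 1), φ (sigE n i) = swp i)
    (hsb : ∀ i : Fin (n - 1), φ (sigbE n i) = swp i)
    (ht : ∀ i : Fin (n - 1), φ (tauE n i) = swp i)
    (hr : ∀ i : Fin (n - 1), φ (rhoE n i) = swp i)
    (hg : ∀ j : Fin n, φ (gamE n j) = 1) :
    Submonoid.closure
      ({x : STVB n | ∃ k l : Fin n, k ≠ l ∧ (x = lam n k l ∨ x = lamBar n k l ∨ x = yel n k l)}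
        ∪ Set.range (gamE n)) = MonoidHom.mker φ := by
  have hφr : ∀ e : ℕ, φ (rN n e) = swpN n e := by
    intro e
    by_cases h : e < n - 1
    · rw [rN_in h, swpN_in h]; exact hr ⟨e, h⟩
    · rw [rN_out h, swpN_out h, map_one]
  have hφs : ∀ e : ℕ, φ (sN n e) = swpN n e := by
    intro e
    by_cases h : e < n - 1
    · rw [sN_in h, swpN_in h]; exact hs ⟨e, h⟩
    · rw [sN_out h, swpN_out h, map_one]
  have hφsb : ∀ e : ℕ, φ (sbN n e) = swpN n e := by
    intro e
    by_cases h : e < n - 1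
    · rw [sbN_in h, swpN_in h]; exact hsb ⟨e, h⟩
    · rw [sbN_out h, swpN_out h, map_one]
  have hφt : ∀ e : ℕ, φ (tN n e) = swpN n e := by
    intro e
    by_cases h : e < n - 1
    · rw [tN_in h, swpN_in h]; exact ht ⟨e, h⟩
    · rw [tN_out h, swpN_out h, map_one]
  have hφRL : ∀ u : List ℕ, φ (RL n u) = permL n u := by
    intro u
    induction u with
    | nil => simp [RL, permL]
    | cons e t ih => rw [RL_cons, permL_cons, map_mul, ih, hφr]
  have hφGo : ∀ (D : ℕ → STVB n) (a b : ℕ), φ (D a) = 1 → φ (lamGo D a b) = 1 := by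
    intro D a b hD
    unfold lamGo
    rw [map_mul, map_mul, hD, one_mul, hφRL, hφRL, permL_rev_mul]
  have hφPQ : ∀ (B C : ℕ → STVB n) (k l : ℕ), (∀ a, φ (B a) = 1) → (∀ a, φ (C a) = 1) →
      φ (lamPQ B C k l) = 1 := by
    intro B C k l hB hC
    unfold lamPQ
    split_ifs
    · exact hφGo _ _ _ (hB _)
    · exact hφGo _ _ _ (hC _)
  have hφlam : ∀ k l : Fin n, φ (lam n k l) = 1 := by
    intro k l
    rw [lam_eq]
    refine hφPQ _ _ _ _ (fun a => ?_) (fun a => ?_)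
    · show φ (rN n a * sbN n a) = 1
      rw [map_mul, hφr, hφsb, swpN_sq]
    · show φ (sbN n a * rN n a) = 1
      rw [map_mul, hφr, hφsb, swpN_sq]
  have hφlamBar : ∀ k l : Fin n, φ (lamBar n k l) = 1 := by
    intro k l
    rw [lamBar_eq]
    refine hφPQ _ _ _ _ (fun a => ?_) (fun a => ?_)
    · show φ (sN n a * rN n a) = 1
      rw [map_mul, hφr, hφs, swpN_sq]
    · show φ (rN n a * sN n a) = 1
      rw [map_mul, hφr, hφs, swpN_sq]
  have hφyel : ∀ k l : Fin n, φ (yel n k l) = 1 := by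
    intro k l
    rw [yel_eq]
    refine hφPQ _ _ _ _ (fun a => ?_) (fun a => ?_)
    · show φ (tN n a * rN n a) = 1
      rw [map_mul, hφr, hφt, swpN_sq]
    · show φ (rN n a * tN n a) = 1
      rw [map_mul, hφr, hφt, swpN_sq]
  set S : Set (STVB n) :=
    {x : STVB n | ∃ k l : Fin n, k ≠ l ∧
      (x = lam n k l ∨ x = lamBar n k l ∨ x = yel n k l)} ∪ Set.range (gamE n) with hSdef
  have main : ∀ w : List (Gen n), ∃ c ∈ Submonoid.closure S, ∃ u : List ℕ,
      (∀ e ∈ u, e < n - 1) ∧ mkS n (FreeMonoid.ofList w) = c * RL n u ∧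
      permL n u = φ (mkS n (FreeMonoid.ofList w)) := by
    intro w
    induction w using List.reverseRecOn with
    | nil =>
        refine ⟨1, Submonoid.one_mem _, [], by simp, ?_, ?_⟩
        · show mkS n 1 = 1 * RL n []
          rw [map_one, RL_nil, mul_one]
        · show permL n [] = φ (mkS n 1)
          rw [map_one, map_one, permL_nil]
    | append_singleton t g ih =>
        obtain ⟨c, hc, u, hu, heq, hperm⟩ := ih
        have hsplit : mkS n (FreeMonoid.ofList (t ++ [g])) =
            mkS n (FreeMonoid.ofList t) * mkS n (FreeMonoid.of g) := by
          rw [FreeMonoid.ofList_append, map_mul]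
          rfl
        have hucat : ∀ (i : Fin (n-1)) (e : ℕ), e ∈ u ++ [i.val] → e < n - 1 := by
          intro i e he
          rcases List.mem_append.mp he with h | h
          · exact hu e h
          · simp at h
            subst h
            exact i.isLt
        cases g with
        | rho i =>
            have hgr : mkS n (FreeMonoid.of (Gen.rho i)) = rN n i.val :=
              (rN_in i.isLt).symm
            have hφg : φ (mkS n (FreeMonoid.of (Gen.rho i))) = swpN n i.val := by
              rw [show swpN n i.val = swp i from swpN_in i.isLt]
              exact hr i
            refine ⟨c, hc, u ++ [i.val], hucat i, ?_, ?_⟩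
            · rw [hsplit, heq, hgr, RL_concat, ← mul_assoc]
            · rw [permL_append, permL_single, hsplit, map_mul, hperm, hφg]
        | sig i =>
            have hfb : fa i ≠ fb i := by
              intro hc2
              have := congrArg Fin.val hc2
              simp [fa, fb] at this
            have hne : permL n u (fa i) ≠ permL n u (fb i) := (Equiv.injective _).ne hfb
            have hφg : φ (mkS n (FreeMonoid.of (Gen.sig i))) = swpN n i.val := by
              rw [show swpN n i.val = swp i from swpN_in i.isLt]
              exact hs i
            refine ⟨c * lamBar n (permL n u (fa i)) (permL n u (fb i)),
              Submonoid.mul_mem _ hc (Submonoid.subset_closure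
                (Or.inl ⟨_, _, hne, Or.inr (Or.inl rfl)⟩)),
              u ++ [i.val], hucat i, ?_, ?_⟩
            · have hdec : mkS n (FreeMonoid.of (Gen.sig i)) =
                  lamBar n (fa i) (fb i) * rN n i.val := sig_decomp i
              rw [hsplit, heq, hdec]
              calc c * RL n u * (lamBar n (fa i) (fb i) * rN n i.val)
                  = c * (RL n u * lamBar n (fa i) (fb i)) * rN n i.val := by
                    simp only [mul_assoc]
                _ = c * (lamBar n (permL n u (fa i)) (permL n u (fb i)) * RL n u) *
                    rN n i.val := by rw [RL_conj_lamBar hu hfb]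
                _ = c * lamBar n (permL n u (fa i)) (permL n u (fb i)) *
                    RL n (u ++ [i.val]) := by rw [RL_concat]; simp only [mul_assoc]
            · rw [permL_append, permL_single, hsplit, map_mul, hperm, hφg]
        | sigb i =>
            have hfb : fb i ≠ fa i := by
              intro hc2
              have := congrArg Fin.val hc2
              simp [fa, fb] at this
            have hne : permL n u (fb i) ≠ permL n u (fa i) := (Equiv.injective _).ne hfb
            have hφg : φ (mkS n (FreeMonoid.of (Gen.sigb i))) = swpN n i.val := by
              rw [show swpN n i.val = swp i from swpN_in i.isLt]
              exact hsb i
            refine ⟨c * lam n (permL n u (fb i)) (permL n u (fa i)),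
              Submonoid.mul_mem _ hc (Submonoid.subset_closure
                (Or.inl ⟨_, _, hne, Or.inl rfl⟩)),
              u ++ [i.val], hucat i, ?_, ?_⟩
            · have hdec : mkS n (FreeMonoid.of (Gen.sigb i)) =
                  lam n (fb i) (fa i) * rN n i.val := sigb_decomp i
              rw [hsplit, heq, hdec]
              calc c * RL n u * (lam n (fb i) (fa i) * rN n i.val)
                  = c * (RL n u * lam n (fb i) (fa i)) * rN n i.val := by
                    simp only [mul_assoc]
                _ = c * (lam n (permL n u (fb i)) (permL n u (fa i)) * RL n u) *
                    rN n i.val := by rw [RL_conj_lam hu hfb]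
                _ = c * lam n (permL n u (fb i)) (permL n u (fa i)) *
                    RL n (u ++ [i.val]) := by rw [RL_concat]; simp only [mul_assoc]
            · rw [permL_append, permL_single, hsplit, map_mul, hperm, hφg]
        | tau i =>
            have hfb : fa i ≠ fb i := by
              intro hc2
              have := congrArg Fin.val hc2
              simp [fa, fb] at this
            have hne : permL n u (fa i) ≠ permL n u (fb i) := (Equiv.injective _).ne hfb
            have hφg : φ (mkS n (FreeMonoid.of (Gen.tau i))) = swpN n i.val := by
              rw [show swpN n i.val = swp i from swpN_in i.isLt]
              exact ht i
            refine ⟨c * yel n (permL n u (fa i)) (permL n u (fb i)),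
              Submonoid.mul_mem _ hc (Submonoid.subset_closure
                (Or.inl ⟨_, _, hne, Or.inr (Or.inr rfl)⟩)),
              u ++ [i.val], hucat i, ?_, ?_⟩
            · have hdec : mkS n (FreeMonoid.of (Gen.tau i)) =
                  yel n (fa i) (fb i) * rN n i.val := tau_decomp i
              rw [hsplit, heq, hdec]
              calc c * RL n u * (yel n (fa i) (fb i) * rN n i.val)
                  = c * (RL n u * yel n (fa i) (fb i)) * rN n i.val := by
                    simp only [mul_assoc]
                _ = c * (yel n (permL n u (fa i)) (permL n u (fb i)) * RL n u) *
                    rN n i.val := by rw [RL_conj_yel hu hfb]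
                _ = c * yel n (permL n u (fa i)) (permL n u (fb i)) *
                    RL n (u ++ [i.val]) := by rw [RL_concat]; simp only [mul_assoc]
            · rw [permL_append, permL_single, hsplit, map_mul, hperm, hφg]
        | gam j =>
            refine ⟨c * gamE n (permL n u j),
              Submonoid.mul_mem _ hc (Submonoid.subset_closure (Or.inr ⟨_, rfl⟩)),
              u, hu, ?_, ?_⟩
            · rw [hsplit, heq, show mkS n (FreeMonoid.of (Gen.gam j)) = gamE n j from rfl,
                mul_assoc, RL_conj_gam hu j, ← mul_assoc]
            · rw [hsplit, map_mul, hperm,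
                show φ (mkS n (FreeMonoid.of (Gen.gam j))) = 1 from hg j, mul_one]
  apply le_antisymm
  · rw [Submonoid.closure_le]
    rintro x hx
    rw [SetLike.mem_coe, MonoidHom.mem_mker]
    rcases hx with ⟨k, l, hkl, hcase⟩ | ⟨j, rfl⟩
    · rcases hcase with rfl | rfl | rfl
      · exact hφlam k l
      · exact hφlamBar k l
      · exact hφyel k l
    · exact hg j
  · intro x hx
    rw [MonoidHom.mem_mker] at hx
    obtain ⟨w, rfl⟩ := PresentedMonoid.surjective_mk (rels := Rel n) x
    obtain ⟨c, hc, u, hu, heq, hperm⟩ := main (FreeMonoid.toList w)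
    have hw : FreeMonoid.ofList (FreeMonoid.toList w) = w := rfl
    rw [hw] at heq hperm
    have hRLu : RL n u = 1 := by
      apply RL_triv (fun e he => by have := hu e he; omega)
      rw [hperm]
      exact hx
    have hfinal : mkS n w = c := by
      rw [heq, hRLu, mul_one]
    show PresentedMonoid.mk (Rel n) w ∈ _
    rw [show PresentedMonoid.mk (Rel n) w = mkS n w from rfl, hfinal]
    exact hc
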